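/- Let A : ℕ → ℕ → ℤ[q] be the family of polynomials determined by A n 0 = 1 for all n ≥ 1, A 0 r = 0 for all r ≥ 1, and the recurrence A (n+1) (r+1) = q^(r+1) · A n (r+1) + (q^(n−r) − q^r) · A n r for all n, r ≥ 0. Then for every n ≥ 1, the following identity holds in ℤ[q]: Σ_{r=0}^{⌊n/2⌋} A n r = Σ_{l=0}^{⌊n/2⌋} (C(n, l) − C(n, l−1)) · q^(ln − l²) · ( Σ_{i=0}^{⌊(n−2l)/2⌋} (−1)^i · q^(i(i−1)/2) · [n−2l−i choose i]_q ), where [m choose k]_q is the Gaussian binomial coefficient and C(m,k) is the ordinary binomial coefficient with C(m,k) = 0 unless 0 ≤ k ≤ m. -/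
import Mathlib

open Polynomial

/-- Ordinary binomial coefficient with an integer lower index, with the
convention that `C(m, k) = 0` unless `0 ≤ k ≤ m`. -/
def intChoose (m : ℕ) (k : ℤ) : ℤ :=
  if 0 ≤ k then (m.choose k.toNat : ℤ) else 0

namespace KirillovAux

lemma tri (i : ℕ) : (i+1)*((i+1)-1)/2 = i*(i-1)/2 + i := by
  cases i with
  | zero => rfl
  | succ j =>
    show (j+2)*(j+2-1)/2 = (j+1)*(j+1-1)/2 + (j+1)
    rw [show j+2-1 = j+1 by omega, show j+1-1 = j by omega]
    rw [show (j+2)*(j+1) = (j+1)*j + (j+1)*2 by ring,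
      Nat.add_mul_div_right _ _ (by norm_num)]

lemma one_sub_X_pow_ne (k : ℕ) : (1 - (X : Polynomial ℤ)^(k+1)) ≠ 0 := by
  intro h
  have h0 := congrArg (fun p => Polynomial.coeff p 0) h
  simp [Polynomial.coeff_X_pow] at h0

lemma prodD_ne_zero (k : ℕ) :
    (∏ j ∈ Finset.range k, (1 - (X : Polynomial ℤ)^(j+1))) ≠ 0 :=
  Finset.prod_ne_zero_iff.mpr fun j _ => one_sub_X_pow_ne j

/-- product of `(1 - X^(m - j))` for `j < k`. -/
noncomputable def Pt (m k : ℕ) : Polynomial ℤ :=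
  ∏ j ∈ Finset.range k, (1 - (X : Polynomial ℤ)^(m - j))

lemma Pt_succ_top (m k : ℕ) :
    Pt (m+1) (k+1) = (1 - (X : Polynomial ℤ)^(m+1)) * Pt m k := by
  unfold Pt
  rw [Finset.prod_range_succ', Nat.sub_zero, mul_comm]
  congr 1
  apply Finset.prod_congr rfl
  intro j _
  congr 2
  omega

lemma Pt_succ_bot (m k : ℕ) : Pt m (k+1) = Pt m k * (1 - (X : Polynomial ℤ)^(m-k)) :=
  Finset.prod_range_succ _ _

section Glemmas

variable (G : ℕ → ℕ → Polynomial ℤ)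
  (hG : ∀ m k : ℕ, k ≤ m →
    G m k * ∏ i ∈ Finset.range k, (1 - (X : Polynomial ℤ) ^ (i + 1)) =
      ∏ i ∈ Finset.range k, (1 - (X : Polynomial ℤ) ^ (m - i)))
  (hG0 : ∀ m k : ℕ, m < k → G m k = 0)

include hG

lemma hG' : ∀ m k : ℕ, k ≤ m →
    G m k * ∏ i ∈ Finset.range k, (1 - (X : Polynomial ℤ) ^ (i + 1)) = Pt m k := hG

lemma G_zero (m : ℕ) : G m 0 = 1 := by
  have := hG m 0 (Nat.zero_le _); simpa using this

lemma G_diag (m : ℕ) : G m m = 1 := by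
  have h := hG m m le_rfl
  have h2 : Pt m m = ∏ j ∈ Finset.range m, (1 - (X : Polynomial ℤ)^(j+1)) := by
    have hr := Finset.prod_range_reflect (fun j => 1 - (X : Polynomial ℤ)^(j+1)) m
    rw [← hr]
    apply Finset.prod_congr rfl
    intro j hj
    simp only [Finset.mem_range] at hj
    congr 2
    omega
  have h3 := (hG' G hG m m le_rfl).trans h2
  exact mul_right_cancel₀ (prodD_ne_zero m) (by rw [h3, one_mul])

lemma E2 (m i : ℕ) (h : i ≤ m) :
    ((X : Polynomial ℤ)^(m+1) - X^i) * G (m+1) i = (X^(m+1+i) - X^i) * G m i := by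
  obtain ⟨d, rfl⟩ : ∃ d, m = i + d := ⟨m - i, by omega⟩
  have key : Pt (i+d+1) i * (1 - (X : Polynomial ℤ)^(d+1)) = (1 - X^(i+d+1)) * Pt (i+d) i := by
    have h1 := Pt_succ_top (i+d) i
    have h2 := Pt_succ_bot (i+d+1) i
    rw [show i+d+1-i = d+1 by omega] at h2
    rw [← h1, ← h2]
  apply mul_right_cancel₀ (prodD_ne_zero i)
  rw [mul_assoc, hG' G hG (i+d+1) i (by omega), mul_assoc, hG' G hG (i+d) i (by omega)]
  linear_combination (-(X : Polynomial ℤ)^i) * key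

include hG0

lemma E1 (m i : ℕ) (h : i ≤ m) :
    G (m+1) (i+1) = (X : Polynomial ℤ)^(i+1) * G m (i+1) + G m i := by
  rcases eq_or_lt_of_le h with rfl | hlt
  · rw [G_diag G hG, G_diag G hG, hG0 i (i+1) (by omega)]
    ring
  · obtain ⟨d, rfl⟩ : ∃ d, m = i + 1 + d := ⟨m - i - 1, by omega⟩
    apply mul_right_cancel₀ (prodD_ne_zero (i+1))
    rw [hG' G hG (i+1+d+1) (i+1) (by omega), add_mul, mul_assoc,
      hG' G hG (i+1+d) (i+1) (by omega),
      Finset.prod_range_succ, ← mul_assoc, hG' G hG (i+1+d) i (by omega)]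
    have h1 : Pt (i+1+d+1) (i+1) = (1 - (X : Polynomial ℤ)^(i+1+d+1)) * Pt (i+1+d) i := by
      have := Pt_succ_top (i+1+d) i
      rw [this]
    have h2 : Pt (i+1+d) (i+1) = Pt (i+1+d) i * (1 - (X : Polynomial ℤ)^(d+1)) := by
      have := Pt_succ_bot (i+1+d) i
      rw [show i+1+d-i = d+1 by omega] at this
      rw [this]
    rw [h1, h2]
    ring

lemma diamond (m i : ℕ) (h : i ≤ m) :
    (X : Polynomial ℤ)^(m+1+i) * G m i + X^(2*i+1) * G m (i+1)
      = X^i * G (m+1) (i+1) + (X^(m+1) - X^i) * G (m+1) i := by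
  rw [E1 G hG hG0 m i h, E2 G hG m i h]
  ring

end Glemmas

/-- The summand. -/
noncomputable def Tf (G : ℕ → ℕ → Polynomial ℤ) (n l i : ℕ) : Polynomial ℤ :=
  (X : Polynomial ℤ)^(l*n - l^2) *
    ((-1 : Polynomial ℤ)^i * (X : Polynomial ℤ)^(i*(i-1)/2) * G (n - 2*l - i) i)

noncomputable def Cb (n l : ℕ) : Polynomial ℤ :=
  Polynomial.C (intChoose n (l : ℤ) - intChoose n ((l : ℤ) - 1))

noncomputable def Ff (G : ℕ → ℕ → Polynomial ℤ) (n r : ℕ) : Polynomial ℤ :=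
  ∑ l ∈ Finset.range (r+1), Cb n l * Tf G n l (r - l)

lemma intChoose_natCast (n k : ℕ) : intChoose n (k : ℤ) = n.choose k := by
  simp [intChoose]

lemma intChoose_neg (n : ℕ) (k : ℤ) (h : k < 0) : intChoose n k = 0 := by
  simp [intChoose, not_le.mpr h]

lemma bPascal (n : ℕ) (k : ℤ) :
    intChoose (n+1) k = intChoose n k + intChoose n (k-1) := by
  rcases lt_trichotomy k 0 with hk | rfl | hk
  · rw [intChoose_neg _ _ hk, intChoose_neg _ _ hk, intChoose_neg _ _ (by omega)]
    ring
  · simp [intChoose]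
  · have h0 : (0:ℤ) ≤ k := le_of_lt hk
    have h1 : (0:ℤ) ≤ k - 1 := by omega
    have ht : k.toNat = (k-1).toNat + 1 := by omega
    unfold intChoose
    rw [if_pos h0, if_pos h0, if_pos h1, ht, Nat.choose_succ_succ]
    push_cast
    ring

end KirillovAux
namespace KirillovAux

section Main

variable (G : ℕ → ℕ → Polynomial ℤ)
  (hG : ∀ m k : ℕ, k ≤ m →
    G m k * ∏ i ∈ Finset.range k, (1 - (X : Polynomial ℤ) ^ (i + 1)) =
      ∏ i ∈ Finset.range k, (1 - (X : Polynomial ℤ) ^ (m - i)))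
  (hG0 : ∀ m k : ℕ, m < k → G m k = 0)

lemma star' (m l i : ℕ)
    (hG : ∀ m k : ℕ, k ≤ m →
      G m k * ∏ i ∈ Finset.range k, (1 - (X : Polynomial ℤ) ^ (i + 1)) =
        ∏ i ∈ Finset.range k, (1 - (X : Polynomial ℤ) ^ (m - i)))
    (hG0 : ∀ m k : ℕ, m < k → G m k = 0) :
    Tf G (m+2*l+2*i+1+1) l (i+1) + Tf G (m+2*l+2*i+1+1) (l+1) i
      = (X : Polynomial ℤ)^(l+i+1) * Tf G (m+2*l+2*i+1) l (i+1)
        + ((X : Polynomial ℤ)^(m+l+i+1) - (X : Polynomial ℤ)^(l+i)) * Tf G (m+2*l+2*i+1) l i := by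
  have hd := diamond G hG hG0 (m+i) i (by omega)
  simp only [Tf]
  rw [show l*(m+2*l+2*i+1+1) - l^2 = l*(m+l+2*i+1) + l from by
        rw [show l*(m+2*l+2*i+1+1) = l^2 + (l*(m+l+2*i+1) + l) by ring]
        exact Nat.add_sub_cancel_left _ _,
      show (l+1)*(m+2*l+2*i+1+1) - (l+1)^2 = l*(m+l+2*i+1) + (m+l+2*i+1) from by
        rw [show (l+1)*(m+2*l+2*i+1+1) = (l+1)^2 + (l*(m+l+2*i+1) + (m+l+2*i+1)) by ring]
        exact Nat.add_sub_cancel_left _ _,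
      show l*(m+2*l+2*i+1) - l^2 = l*(m+l+2*i+1) from by
        rw [show l*(m+2*l+2*i+1) = l^2 + l*(m+l+2*i+1) by ring]
        exact Nat.add_sub_cancel_left _ _,
      show m+2*l+2*i+1+1 - 2*l - (i+1) = m+i+1 by omega,
      show m+2*l+2*i+1+1 - 2*(l+1) - i = m+i by omega,
      show m+2*l+2*i+1 - 2*l - (i+1) = m+i by omega,
      show m+2*l+2*i+1 - 2*l - i = m+i+1 by omega,
      tri i]
  linear_combination ((-1 : Polynomial ℤ)^i * (X : Polynomial ℤ)^(l*(m+l+2*i+1) + i*(i-1)/2 + l)) * hd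

include hG in
lemma Ff_one (n : ℕ) : Ff G n 0 = 1 := by
  unfold Ff Cb Tf
  rw [Finset.sum_range_one]
  simp [intChoose, G_zero G hG]

include hG0 in
lemma F_boundary (r : ℕ) : Ff G (2*r+1) (r+1) = 0 := by
  unfold Ff
  apply Finset.sum_eq_zero
  intro l hl
  simp only [Finset.mem_range] at hl
  rcases Nat.lt_or_ge l (r+1) with hlr | hlr
  · have hz : G (2*r+1 - 2*l - (r+1-l)) (r+1-l) = 0 := by
      rw [show 2*r+1 - 2*l - (r+1-l) = r - l by omega]
      exact hG0 _ _ (by omega)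
    simp [Tf, hz]
  · have hl1 : l = r+1 := by omega
    subst hl1
    have hc : Cb (2*r+1) (r+1) = 0 := by
      unfold Cb
      have h2 : ((r+1 : ℕ) : ℤ) - 1 = ((r : ℕ) : ℤ) := by push_cast; ring
      rw [h2, intChoose_natCast, intChoose_natCast, Nat.choose_symm_half]
      simp
    rw [hc, zero_mul]

lemma Cb_succ (n l : ℕ) :
    Cb (n+1) l = Cb n l + Polynomial.C (intChoose n ((l:ℤ)-1) - intChoose n ((l:ℤ)-2)) := by
  unfold Cb
  rw [← Polynomial.C_add]
  congr 1
  have h1 := bPascal n (l : ℤ)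
  have h2 := bPascal n ((l : ℤ) - 1)
  rw [show (l:ℤ)-1-1 = (l:ℤ)-2 by ring] at h2
  rw [h1, h2]
  ring

include hG hG0 in
lemma Ff_step (n r : ℕ) (h : 2*r+1 ≤ n) :
    Ff G (n+1) (r+1) = (X : Polynomial ℤ)^(r+1) * Ff G n (r+1)
      + ((X : Polynomial ℤ)^(n-r) - (X : Polynomial ℤ)^r) * Ff G n r := by
  unfold Ff
  have hA : ∑ l ∈ Finset.range (r+1+1), Cb n l * Tf G (n+1) l (r+1-l)
      = (∑ l ∈ Finset.range (r+1), Cb n l * Tf G (n+1) l (r+1-l))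
        + Cb n (r+1) * Tf G (n+1) (r+1) 0 := by
    rw [Finset.sum_range_succ, Nat.sub_self]
  have hB : ∑ l ∈ Finset.range (r+1+1),
        Polynomial.C (intChoose n ((l:ℤ)-1) - intChoose n ((l:ℤ)-2)) * Tf G (n+1) l (r+1-l)
      = ∑ l ∈ Finset.range (r+1), Cb n l * Tf G (n+1) (l+1) (r-l) := by
    rw [Finset.sum_range_succ']
    have hlast : Polynomial.C (intChoose n (((0:ℕ):ℤ)-1) - intChoose n (((0:ℕ):ℤ)-2)) = 0 := by
      rw [intChoose_neg n _ (by norm_num), intChoose_neg n _ (by norm_num)]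
      simp
    rw [hlast, zero_mul, add_zero]
    apply Finset.sum_congr rfl
    intro l _
    have e1 : ((l+1 : ℕ) : ℤ) - 1 = (l : ℤ) := by push_cast; ring
    have e2 : ((l+1 : ℕ) : ℤ) - 2 = (l : ℤ) - 1 := by push_cast; ring
    rw [e1, e2, show r+1-(l+1) = r-l by omega]
    rfl
  have hC : (X : Polynomial ℤ)^(r+1) * ∑ l ∈ Finset.range (r+1+1), Cb n l * Tf G n l (r+1-l)
      = (∑ l ∈ Finset.range (r+1), (X : Polynomial ℤ)^(r+1) * (Cb n l * Tf G n l (r+1-l)))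
        + (X : Polynomial ℤ)^(r+1) * (Cb n (r+1) * Tf G n (r+1) 0) := by
    rw [Finset.mul_sum, Finset.sum_range_succ, Nat.sub_self]
  have hD : ((X : Polynomial ℤ)^(n-r) - (X : Polynomial ℤ)^r)
        * ∑ l ∈ Finset.range (r+1), Cb n l * Tf G n l (r-l)
      = ∑ l ∈ Finset.range (r+1),
          ((X : Polynomial ℤ)^(n-r) - (X : Polynomial ℤ)^r) * (Cb n l * Tf G n l (r-l)) :=
    Finset.mul_sum _ _ _
  have hterm : ∀ l ∈ Finset.range (r+1),
      Cb n l * Tf G (n+1) l (r+1-l) + Cb n l * Tf G (n+1) (l+1) (r-l)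
        = (X : Polynomial ℤ)^(r+1) * (Cb n l * Tf G n l (r+1-l))
          + ((X : Polynomial ℤ)^(n-r) - (X : Polynomial ℤ)^r) * (Cb n l * Tf G n l (r-l)) := by
    intro l hl
    simp only [Finset.mem_range] at hl
    obtain ⟨i, rfl⟩ : ∃ i, r = l + i := ⟨r - l, by omega⟩
    obtain ⟨m, rfl⟩ : ∃ m, n = m + 2*l + 2*i + 1 := ⟨n - (2*l + 2*i + 1), by omega⟩
    have hstar := star' G m l i hG hG0
    rw [show l+i+1-l = i+1 by omega, show l+i-l = i by omega,
        show m+2*l+2*i+1 - (l+i) = m+l+i+1 by omega]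
    linear_combination Cb (m+2*l+2*i+1) l * hstar
  have hedge : Cb n (r+1) * Tf G (n+1) (r+1) 0
      = (X : Polynomial ℤ)^(r+1) * (Cb n (r+1) * Tf G n (r+1) 0) := by
    obtain ⟨m, rfl⟩ : ∃ m, n = m + 2*r + 1 := ⟨n - (2*r+1), by omega⟩
    simp only [Tf]
    rw [show m+2*r+1+1 - 2*(r+1) - 0 = m by omega,
        show m+2*r+1 - 2*(r+1) - 0 = m - 1 by omega,
        G_zero G hG, G_zero G hG,
        show (r+1)*(m+2*r+1+1) - (r+1)^2 = (r+1)*(m+r+1) from by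
          rw [show (r+1)*(m+2*r+1+1) = (r+1)^2 + (r+1)*(m+r+1) by ring]
          exact Nat.add_sub_cancel_left _ _,
        show (r+1)*(m+2*r+1) - (r+1)^2 = (r+1)*(m+r) from by
          rw [show (r+1)*(m+2*r+1) = (r+1)^2 + (r+1)*(m+r) by ring]
          exact Nat.add_sub_cancel_left _ _,
        show (r+1)*(m+r+1) = (r+1) + (r+1)*(m+r) by ring, pow_add]
    ring
  calc ∑ l ∈ Finset.range (r+1+1), Cb (n+1) l * Tf G (n+1) l (r+1-l)
      = ∑ l ∈ Finset.range (r+1+1), (Cb n l * Tf G (n+1) l (r+1-l)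
          + Polynomial.C (intChoose n ((l:ℤ)-1) - intChoose n ((l:ℤ)-2)) * Tf G (n+1) l (r+1-l)) := by
        apply Finset.sum_congr rfl
        intro l _
        rw [Cb_succ, add_mul]
    _ = (∑ l ∈ Finset.range (r+1+1), Cb n l * Tf G (n+1) l (r+1-l))
        + ∑ l ∈ Finset.range (r+1+1),
            Polynomial.C (intChoose n ((l:ℤ)-1) - intChoose n ((l:ℤ)-2)) * Tf G (n+1) l (r+1-l) :=
        Finset.sum_add_distrib
    _ = ((∑ l ∈ Finset.range (r+1), Cb n l * Tf G (n+1) l (r+1-l))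
          + Cb n (r+1) * Tf G (n+1) (r+1) 0)
        + ∑ l ∈ Finset.range (r+1), Cb n l * Tf G (n+1) (l+1) (r-l) := by rw [hA, hB]
    _ = (∑ l ∈ Finset.range (r+1), (Cb n l * Tf G (n+1) l (r+1-l)
          + Cb n l * Tf G (n+1) (l+1) (r-l)))
        + Cb n (r+1) * Tf G (n+1) (r+1) 0 := by
        rw [Finset.sum_add_distrib]; ring
    _ = (∑ l ∈ Finset.range (r+1), ((X : Polynomial ℤ)^(r+1) * (Cb n l * Tf G n l (r+1-l))
          + ((X : Polynomial ℤ)^(n-r) - (X : Polynomial ℤ)^r) * (Cb n l * Tf G n l (r-l))))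
        + (X : Polynomial ℤ)^(r+1) * (Cb n (r+1) * Tf G n (r+1) 0) := by
        rw [Finset.sum_congr rfl hterm, hedge]
    _ = (X : Polynomial ℤ)^(r+1) * (∑ l ∈ Finset.range (r+1+1), Cb n l * Tf G n l (r+1-l))
        + ((X : Polynomial ℤ)^(n-r) - (X : Polynomial ℤ)^r)
          * ∑ l ∈ Finset.range (r+1), Cb n l * Tf G n l (r-l) := by
        rw [Finset.sum_add_distrib, hC, hD]; ring

end Main

end KirillovAux
namespace KirillovAux

section ALemmas

variable (A : ℕ → ℕ → Polynomial ℤ)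
    (hA1 : ∀ n : ℕ, 1 ≤ n → A n 0 = 1)
    (hA0 : ∀ r : ℕ, 1 ≤ r → A 0 r = 0)
    (hrec : ∀ n r : ℕ, A (n + 1) (r + 1) =
      (X : Polynomial ℤ) ^ (r + 1) * A n (r + 1) +
        ((X : Polynomial ℤ) ^ (n - r) - (X : Polynomial ℤ) ^ r) * A n r)
    (G : ℕ → ℕ → Polynomial ℤ)
    (hG : ∀ m k : ℕ, k ≤ m →
      G m k * ∏ i ∈ Finset.range k, (1 - (X : Polynomial ℤ) ^ (i + 1)) =
        ∏ i ∈ Finset.range k, (1 - (X : Polynomial ℤ) ^ (m - i)))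
    (hG0 : ∀ m k : ℕ, m < k → G m k = 0)

include hA0 hrec in
lemma A_vanish : ∀ n r : ℕ, n < 2*r → A n r = 0 := by
  intro n
  induction n with
  | zero => intro r h; exact hA0 r (by omega)
  | succ n ih =>
    intro r h
    cases r with
    | zero => omega
    | succ r =>
      rw [hrec n r, ih (r+1) (by omega)]
      rcases Nat.lt_or_ge n (2*r) with h2 | h2
      · rw [ih r h2]; ring
      · have hn : n = 2*r := by omega
        subst hn
        rw [show 2*r - r = r by omega]
        ring

include hA1 hA0 hrec hG hG0 in
lemma A_eq_F : ∀ n, 1 ≤ n → ∀ r, 2*r ≤ n+1 → A n r = Ff G n r := by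
  intro n
  induction n with
  | zero => intro h; omega
  | succ n ih =>
    intro _ r hr
    cases r with
    | zero =>
      rw [hA1 _ (by omega)]
      exact (Ff_one G hG _).symm
    | succ r =>
      cases n with
      | zero =>
        -- n+1 = 1, r+1 ≤ 1 so r = 0
        have hr0 : r = 0 := by omega
        subst hr0
        rw [hrec 0 0, hA0 1 le_rfl]
        have hb := F_boundary G hG0 0
        norm_num at hb ⊢
        simp [hb]
      | succ k =>
        rw [hrec (k+1) r]
        have hAr : A (k+1) r = Ff G (k+1) r := ih (by omega) r (by omega)
        rcases Nat.lt_or_ge k (2*r) with h2 | h2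
        · -- boundary: k+1 = 2r, i.e. 2r = k+1
          have hk : k + 1 = 2*r := by omega
          rw [A_vanish A hA0 hrec (k+1) (r+1) (by omega),
              show k+1-r = r by omega,
              show k+1+1 = 2*r+1 by omega, F_boundary G hG0 r]
          ring
        · rw [ih (by omega) (r+1) (by omega), hAr,
            ← Ff_step G hG hG0 (k+1) r (by omega)]

end ALemmas

end KirillovAux

open KirillovAux in
theorem kirillov_A_sum_factored (A : ℕ → ℕ → Polynomial ℤ)
    (hA1 : ∀ n : ℕ, 1 ≤ n → A n 0 = 1)
    (hA0 : ∀ r : ℕ, 1 ≤ r → A 0 r = 0)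
    (hrec : ∀ n r : ℕ, A (n + 1) (r + 1) =
      (X : Polynomial ℤ) ^ (r + 1) * A n (r + 1) +
        ((X : Polynomial ℤ) ^ (n - r) - (X : Polynomial ℤ) ^ r) * A n r)
    (G : ℕ → ℕ → Polynomial ℤ)
    (hG : ∀ m k : ℕ, k ≤ m →
      G m k * ∏ i ∈ Finset.range k, (1 - (X : Polynomial ℤ) ^ (i + 1)) =
        ∏ i ∈ Finset.range k, (1 - (X : Polynomial ℤ) ^ (m - i)))
    (hG0 : ∀ m k : ℕ, m < k → G m k = 0)
    (n : ℕ) (hn : 1 ≤ n) :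
    ∑ r ∈ Finset.range (n / 2 + 1), A n r =
      ∑ l ∈ Finset.range (n / 2 + 1),
        Polynomial.C (intChoose n (l : ℤ) - intChoose n ((l : ℤ) - 1)) *
          (X : Polynomial ℤ) ^ (l * n - l ^ 2) *
          ∑ i ∈ Finset.range ((n - 2 * l) / 2 + 1),
            (-1 : Polynomial ℤ) ^ i * (X : Polynomial ℤ) ^ (i * (i - 1) / 2) *
              G (n - 2 * l - i) i := by
  calc ∑ r ∈ Finset.range (n / 2 + 1), A n r
      = ∑ r ∈ Finset.range (n / 2 + 1), Ff G n r := by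
        apply Finset.sum_congr rfl
        intro r hr
        simp only [Finset.mem_range] at hr
        exact A_eq_F A hA1 hA0 hrec G hG hG0 n hn r (by omega)
    _ = ∑ r ∈ Finset.range (n / 2 + 1), ∑ l ∈ Finset.range (r+1), Cb n l * Tf G n l (r - l) :=
        rfl
    _ = ∑ l ∈ Finset.range (n / 2 + 1), ∑ r ∈ Finset.Ico l (n / 2 + 1),
          Cb n l * Tf G n l (r - l) := by
        apply Finset.sum_comm'
        intro r l
        simp only [Finset.mem_range, Finset.mem_Ico]
        omega
    _ = ∑ l ∈ Finset.range (n / 2 + 1),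
        Polynomial.C (intChoose n (l : ℤ) - intChoose n ((l : ℤ) - 1)) *
          (X : Polynomial ℤ) ^ (l * n - l ^ 2) *
          ∑ i ∈ Finset.range ((n - 2 * l) / 2 + 1),
            (-1 : Polynomial ℤ) ^ i * (X : Polynomial ℤ) ^ (i * (i - 1) / 2) *
              G (n - 2 * l - i) i := by
        apply Finset.sum_congr rfl
        intro l hl
        simp only [Finset.mem_range] at hl
        rw [Finset.sum_Ico_eq_sum_range,
          show n / 2 + 1 - l = (n - 2*l)/2 + 1 by omega]
        have hstep : ∀ i ∈ Finset.range ((n - 2*l)/2 + 1),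
            Cb n l * Tf G n l (l + i - l)
              = Cb n l * ((X : Polynomial ℤ) ^ (l * n - l ^ 2) *
                  ((-1 : Polynomial ℤ) ^ i * (X : Polynomial ℤ) ^ (i * (i - 1) / 2) *
                    G (n - 2 * l - i) i)) := by
          intro i _
          rw [show l + i - l = i by omega]
          rfl
        rw [Finset.sum_congr rfl hstep, ← Finset.mul_sum, ← Finset.mul_sum]
        unfold Cb
        rw [mul_assoc]
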